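/- Suppose a permutation τ of {1,…,n} contains a permutation π of {1,…,k}. Then there exists an injective map f from {σ ∈ S_k : σ ≤ π} into {ρ ∈ S_n : ρ ≤ τ} (where ≤ denotes Bruhat order) such that f(π) = τ and such that whenever there is a Bruhat-graph edge σ → σ′ in the Bruhat graph of π, there is a Bruhat-graph edge f(σ) → f(σ′) in the Bruhat graph of τ. In other words, the Bruhat graph of π is isomorphic to a subgraph of the Bruhat graph of τ containing the sink vertex τ. -/

import Mathlib

/-- The (Coxeter) length of a permutation: its number of inversions,
i.e. pairs `i < j` with `σ i > σ j`. -/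
def invCount {m : ℕ} (σ : Equiv.Perm (Fin m)) : ℕ :=
  (Finset.univ.filter (fun p : Fin m × Fin m => p.1 < p.2 ∧ σ p.2 < σ p.1)).card

/-- `σ` pattern-contains `π`: there are indices `i_1 < ⋯ < i_k` such that
`σ (i_a) < σ (i_b)` iff `π a < π b`. -/
def PatternContains {n k : ℕ} (σ : Equiv.Perm (Fin n)) (π : Equiv.Perm (Fin k)) : Prop :=
  ∃ f : Fin k ↪o Fin n, ∀ a b : Fin k, σ (f a) < σ (f b) ↔ π a < π b

/-- An edge of the Bruhat graph: `σ → τ` when `ℓ(σ) < ℓ(τ)` and `τσ⁻¹` is a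
transposition. -/
def BruhatEdge {n : ℕ} (σ τ : Equiv.Perm (Fin n)) : Prop :=
  invCount σ < invCount τ ∧ (τ * σ⁻¹).IsSwap

/-- Bruhat order: the reflexive-transitive closure of `BruhatEdge`. -/
def BruhatLe {n : ℕ} : Equiv.Perm (Fin n) → Equiv.Perm (Fin n) → Prop :=
  Relation.ReflTransGen BruhatEdge

private lemma invCount_mul_swap_gt {m : ℕ} (ρ : Equiv.Perm (Fin m)) {p q : Fin m} (hpq : p < q)
    (hv : ρ p < ρ q) : invCount ρ < invCount (ρ * Equiv.swap p q) := by
  classical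
  set s : Equiv.Perm (Fin m) := Equiv.swap p q with hs
  have hsp : s p = q := Equiv.swap_apply_left p q
  have hsq : s q = p := Equiv.swap_apply_right p q
  have hso : ∀ x : Fin m, x ≠ p → x ≠ q → s x = x := fun x h1 h2 =>
    Equiv.swap_apply_of_ne_of_ne h1 h2
  have hss : ∀ x, s (s x) = x := fun x => Equiv.swap_apply_self p q x
  set ρ' := ρ * s with hρ'def
  have hρ' : ∀ x, ρ' x = ρ (s x) := fun x => rfl
  set A := Finset.univ.filter (fun ij : Fin m × Fin m => ij.1 < ij.2 ∧ ρ ij.2 < ρ ij.1) with hA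
  set B := Finset.univ.filter (fun ij : Fin m × Fin m => ij.1 < ij.2 ∧ ρ' ij.2 < ρ' ij.1) with hB
  have memA : ∀ ij : Fin m × Fin m, ij ∈ A ↔ ij.1 < ij.2 ∧ ρ ij.2 < ρ ij.1 := by
    intro ij; simp [hA]
  have memB : ∀ ij : Fin m × Fin m, ij ∈ B ↔ ij.1 < ij.2 ∧ ρ (s ij.2) < ρ (s ij.1) := by
    intro ij; simp [hB, hρ']
  set g : Fin m × Fin m → Fin m × Fin m :=
    fun ij => if s ij.1 < s ij.2 then (s ij.1, s ij.2) else ij with hg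
  have keep : ∀ i j : Fin m, i < j → ρ j < ρ i → ¬ (s i < s j) →
      (i = p ∧ p < j ∧ j < q) ∨ (j = q ∧ p < i ∧ i < q) := by
    intro i j hij hρij hns
    by_cases hip : i = p
    · by_cases hjq : j = q
      · rw [hip, hjq] at hρij
        exact absurd hv (not_lt.mpr hρij.le)
      · have hjp : j ≠ p := by rw [← hip]; exact ne_of_gt hij
        rw [hip, hsp, hso j hjp hjq] at hns
        have hij' : p < j := by rw [← hip]; exact hij
        exact Or.inl ⟨hip, hij', lt_of_le_of_ne (not_lt.mp hns) hjq⟩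
    · by_cases hiq : i = q
      · have hqj : q < j := by rw [← hiq]; exact hij
        have hjq : j ≠ q := ne_of_gt hqj
        have hjp : j ≠ p := ne_of_gt (lt_trans hpq hqj)
        rw [hiq, hsq, hso j hjp hjq] at hns
        exact absurd (lt_trans hpq hqj) hns
      · by_cases hjp : j = p
        · have hip' : i < p := by rw [← hjp]; exact hij
          rw [hjp, hso i hip hiq, hsp] at hns
          exact absurd (lt_trans hip' hpq) hns
        · by_cases hjq : j = q
          · have hiq' : i < q := by rw [← hjq]; exact hij
            rw [hjq, hso i hip hiq, hsq] at hns
            exact Or.inr ⟨hjq, lt_of_le_of_ne (not_lt.mp hns) (Ne.symm hip), hiq'⟩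
          · rw [hso i hip hiq, hso j hjp hjq] at hns
            exact absurd hij hns
  have hmaps : ∀ ij ∈ A, g ij ∈ B := by
    intro ij hij
    obtain ⟨h1, h2⟩ := (memA ij).mp hij
    by_cases hc : s ij.1 < s ij.2
    · have : g ij = (s ij.1, s ij.2) := if_pos hc
      rw [this, memB]
      exact ⟨hc, by simpa [hss] using h2⟩
    · have : g ij = ij := if_neg hc
      rw [this, memB]
      refine ⟨h1, ?_⟩
      rcases keep ij.1 ij.2 h1 h2 hc with ⟨hi, hpj, hjq⟩ | ⟨hj, hpi, hiq⟩
      · rw [hi, hsp, hso ij.2 (ne_of_gt hpj) (ne_of_lt hjq)]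
        have h2' : ρ ij.2 < ρ p := by rw [← hi]; exact h2
        exact lt_trans h2' hv
      · rw [hj, hsq, hso ij.1 (ne_of_gt hpi) (ne_of_lt hiq)]
        have h2' : ρ q < ρ ij.1 := by rw [← hj]; exact h2
        exact lt_trans hv h2'
  have mixed : ∀ a b : Fin m × Fin m, a.1 < a.2 → b.1 < b.2 → ρ b.2 < ρ b.1 →
      ¬ (s b.1 < s b.2) → (s a.1, s a.2) = b → False := by
    intro a b ha1 hb1 hb2 hcb hab
    have e1 : s a.1 = b.1 := congrArg Prod.fst hab
    have e2 : s a.2 = b.2 := congrArg Prod.snd hab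
    have e1' : a.1 = s b.1 := by rw [← e1, hss]
    have e2' : a.2 = s b.2 := by rw [← e2, hss]
    rcases keep b.1 b.2 hb1 hb2 hcb with ⟨hi, hpj, hjq⟩ | ⟨hj, hpi, hiq⟩
    · -- b = (p, j), p < j < q ; a.1 = s p = q, a.2 = s b.2 = b.2 < q
      rw [hi, hsp] at e1'
      rw [hso b.2 (ne_of_gt hpj) (ne_of_lt hjq)] at e2'
      rw [e1', e2'] at ha1
      exact absurd (lt_trans ha1 hjq) (lt_irrefl q)
    · -- b = (i, q), p < i < q ; a.2 = s q = p, a.1 = b.1 > p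
      rw [hj, hsq] at e2'
      rw [hso b.1 (ne_of_gt hpi) (ne_of_lt hiq)] at e1'
      rw [e1', e2'] at ha1
      exact absurd (lt_trans hpi ha1) (lt_irrefl p)
  have hinj : Set.InjOn g ↑A := by
    intro a ha b hb hab
    obtain ⟨ha1, ha2⟩ := (memA a).mp (by simpa using ha)
    obtain ⟨hb1, hb2⟩ := (memA b).mp (by simpa using hb)
    by_cases hca : s a.1 < s a.2 <;> by_cases hcb : s b.1 < s b.2
    · have ea : g a = (s a.1, s a.2) := if_pos hca
      have eb : g b = (s b.1, s b.2) := if_pos hcb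
      rw [ea, eb, Prod.mk.injEq] at hab
      exact Prod.ext (s.injective hab.1) (s.injective hab.2)
    · have ea : g a = (s a.1, s a.2) := if_pos hca
      have eb : g b = b := if_neg hcb
      rw [ea, eb] at hab
      exact absurd (mixed a b ha1 hb1 hb2 hcb hab) (by simp)
    · have ea : g a = a := if_neg hca
      have eb : g b = (s b.1, s b.2) := if_pos hcb
      rw [ea, eb] at hab
      exact absurd (mixed b a hb1 ha1 ha2 hca hab.symm) (by simp)
    · have ea : g a = a := if_neg hca
      have eb : g b = b := if_neg hcb
      rw [ea, eb] at hab
      exact hab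
  have himg : A.image g ⊆ B := by
    intro x hx
    obtain ⟨ij, hij, rfl⟩ := Finset.mem_image.mp hx
    exact hmaps ij hij
  have hpqB : (p, q) ∈ B := by
    rw [memB]
    refine ⟨hpq, ?_⟩
    simpa [hsp, hsq] using hv
  have hpqnot : (p, q) ∉ A.image g := by
    rw [Finset.mem_image]
    rintro ⟨ij, hij, hg'⟩
    obtain ⟨h1, h2⟩ := (memA ij).mp hij
    by_cases hc : s ij.1 < s ij.2
    · have : g ij = (s ij.1, s ij.2) := if_pos hc
      rw [this, Prod.mk.injEq] at hg'
      have hq1 : ij.1 = q := by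
        have := congrArg s hg'.1; rwa [hss, hsp] at this
      have hp2 : ij.2 = p := by
        have := congrArg s hg'.2; rwa [hss, hsq] at this
      rw [hq1, hp2] at h1
      exact absurd (lt_trans h1 hpq) (lt_irrefl q)
    · have : g ij = ij := if_neg hc
      rw [this] at hg'
      rw [hg'] at h2
      exact absurd hv (not_lt.mpr h2.le)
  calc invCount ρ = A.card := rfl
    _ = (A.image g).card := (Finset.card_image_of_injOn hinj).symm
    _ < B.card := Finset.card_lt_card
        ((Finset.ssubset_iff_of_subset himg).mpr ⟨(p, q), hpqB, hpqnot⟩)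
    _ = invCount ρ' := rfl

private lemma viaEmbedding_swap {k n : ℕ} (e : Fin k ↪ Fin n) (p q : Fin k) :
    Equiv.Perm.viaEmbedding (Equiv.swap p q) e = Equiv.swap (e p) (e q) := by
  ext x
  by_cases hx : x ∈ Set.range e
  · obtain ⟨a, rfl⟩ := hx
    rw [Equiv.Perm.viaEmbedding_apply]
    by_cases hap : a = p
    · subst hap; simp
    · by_cases haq : a = q
      · subst haq; simp
      · rw [Equiv.swap_apply_of_ne_of_ne hap haq,
          Equiv.swap_apply_of_ne_of_ne (fun h => hap (e.injective h))
            (fun h => haq (e.injective h))]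
  · rw [Equiv.Perm.viaEmbedding_apply_of_notMem _ _ x hx,
      Equiv.swap_apply_of_ne_of_ne (fun h => hx ⟨p, h.symm⟩) (fun h => hx ⟨q, h.symm⟩)]

private lemma bruhatEdge_decomp {m : ℕ} {σ σ' : Equiv.Perm (Fin m)} (h : BruhatEdge σ σ') :
    ∃ p q : Fin m, p < q ∧ σ p < σ q ∧ σ' = σ * Equiv.swap p q := by
  obtain ⟨hlt, x, y, hxy, hsw⟩ := h
  have key : ∀ p q : Fin m, p < q → σ' = σ * Equiv.swap p q → σ p < σ q := by
    intro p q hpq hd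
    by_contra hge
    have hne : σ q ≠ σ p := fun hh => (ne_of_lt hpq) (σ.injective hh.symm)
    have hqp : σ q < σ p := lt_of_le_of_ne (not_lt.mp hge) hne
    have h1 : σ' p = σ q := by rw [hd]; simp [Equiv.Perm.mul_apply]
    have h2 : σ' q = σ p := by rw [hd]; simp [Equiv.Perm.mul_apply]
    have := invCount_mul_swap_gt σ' hpq (by rw [h1, h2]; exact hqp)
    rw [hd, Equiv.mul_swap_mul_self] at this
    rw [hd] at hlt
    omega
  have hd : σ' = σ * Equiv.swap (σ⁻¹ x) (σ⁻¹ y) := by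
    have h1 : Equiv.swap x y = σ * Equiv.swap (σ⁻¹ x) (σ⁻¹ y) * σ⁻¹ := by
      have := Equiv.swap_apply_apply σ (σ⁻¹ x) (σ⁻¹ y)
      simpa using this
    have h2 : σ' * σ⁻¹ * σ = σ * Equiv.swap (σ⁻¹ x) (σ⁻¹ y) * σ⁻¹ * σ := by
      rw [hsw, h1]
    simpa [mul_assoc] using h2
  have hne : σ⁻¹ x ≠ σ⁻¹ y := fun hh => hxy (by simpa using congrArg σ hh)
  rcases hne.lt_or_gt with hlt' | hlt'
  · exact ⟨σ⁻¹ x, σ⁻¹ y, hlt', key _ _ hlt' hd, hd⟩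
  · refine ⟨σ⁻¹ y, σ⁻¹ x, hlt', key _ _ hlt' (by rw [hd, Equiv.swap_comm]), by
      rw [hd, Equiv.swap_comm]⟩

/-- Proposition 2.3: if `τ ∈ S_n` contains `π ∈ S_k`, then the Bruhat graph of `π` is
isomorphic to a subgraph of the Bruhat graph of `τ` containing the sink vertex `τ`:
there is an injection `f` of `{σ : σ ≤ π}` into `{ρ : ρ ≤ τ}` sending `π` to `τ` and
carrying every Bruhat-graph edge of `B(π)` to a Bruhat-graph edge of `B(τ)`. -/
theorem bruhat_graph_embeds_of_contains {n k : ℕ}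
    (τ : Equiv.Perm (Fin n)) (π : Equiv.Perm (Fin k)) (h : PatternContains τ π) :
    ∃ f : {σ : Equiv.Perm (Fin k) // BruhatLe σ π} →
          {ρ : Equiv.Perm (Fin n) // BruhatLe ρ τ},
      Function.Injective f ∧
      f ⟨π, Relation.ReflTransGen.refl⟩ = ⟨τ, Relation.ReflTransGen.refl⟩ ∧
      ∀ σ σ' : {σ : Equiv.Perm (Fin k) // BruhatLe σ π},
        BruhatEdge σ.1 σ'.1 → BruhatEdge (f σ).1 (f σ').1 := by
  classical
  obtain ⟨e, he⟩ := h
  set Φ : Equiv.Perm (Fin k) → Equiv.Perm (Fin n) :=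
    fun σ => τ * Equiv.Perm.viaEmbeddingHom e.toEmbedding (π⁻¹ * σ) with hΦ
  have hΦπ : Φ π = τ := by
    simp [hΦ]
  have happ : ∀ (σ : Equiv.Perm (Fin k)) (a : Fin k), Φ σ (e a) = τ (e (π⁻¹ (σ a))) := by
    intro σ a
    simp only [hΦ, Equiv.Perm.viaEmbeddingHom_apply, Equiv.Perm.mul_apply]
    have : (e : Fin k → Fin n) a = e.toEmbedding a := rfl
    rw [this, Equiv.Perm.viaEmbedding_apply]
    rfl
  have hedge : ∀ σ σ' : Equiv.Perm (Fin k), BruhatEdge σ σ' → BruhatEdge (Φ σ) (Φ σ') := by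
    intro σ σ' hss
    obtain ⟨p, q, hpq, hval, hdecomp⟩ := bruhatEdge_decomp hss
    have hΦdecomp : Φ σ' = Φ σ * Equiv.swap (e p) (e q) := by
      rw [hdecomp]
      simp only [hΦ]
      rw [← mul_assoc π⁻¹ σ, map_mul, mul_assoc]
      congr 2
      rw [Equiv.Perm.viaEmbeddingHom_apply, viaEmbedding_swap]
      rfl
    have hep : (e p : Fin n) < e q := e.strictMono hpq
    have hΦval : Φ σ (e p) < Φ σ (e q) := by
      rw [happ, happ, he]
      simpa using hval
    constructor
    · rw [hΦdecomp]
      exact invCount_mul_swap_gt _ hep hΦval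
    · refine ⟨Φ σ (e p), Φ σ (e q), ne_of_lt hΦval, ?_⟩
      rw [hΦdecomp, Equiv.swap_apply_apply, mul_assoc]
  have hΦinj : Function.Injective Φ := by
    intro σ σ' hss
    have h1 := mul_left_cancel hss
    have h2 := Equiv.Perm.viaEmbeddingHom_injective e.toEmbedding h1
    exact mul_left_cancel h2
  have hle : ∀ σ, BruhatLe σ π → BruhatLe (Φ σ) τ := by
    intro σ hσ
    rw [← hΦπ]
    exact Relation.ReflTransGen.lift Φ hedge _ _ hσ
  refine ⟨fun σ => ⟨Φ σ.1, hle σ.1 σ.2⟩, ?_, ?_, ?_⟩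
  · intro a b hab
    exact Subtype.ext (hΦinj (congrArg Subtype.val hab))
  · exact Subtype.ext hΦπ
  · intro σ σ' hss
    exact hedge _ _ hss
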